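/- Let S be a submonoid of an additive commutative monoid. Then S + Int(S) = Int(S), i.e. the set {s + x : s ∈ S, x ∈ Int(S)} equals Int(S). -/
import Mathlib


open Pointwise

/-- The *interior* of a subset `S` of an additive commutative monoid:
`{x ∈ S | ∀ y ∈ S, ∃ n ∈ ℕ, ∃ z ∈ S, n • x = y + z}`. -/
def setInterior {M : Type*} [AddCommMonoid M] (S : Set M) : Set M :=
  {x | x ∈ S ∧ ∀ y ∈ S, ∃ n : ℕ, ∃ z ∈ S, n • x = y + z}

/-- For a submonoid `S` of an additive commutative monoid, `S + Int(S) = Int(S)`. -/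
theorem add_setInterior {M : Type*} [AddCommMonoid M] (S : AddSubmonoid M) :
    (S : Set M) + setInterior (S : Set M) = setInterior (S : Set M) := by
  ext a
  constructor
  · rintro ⟨s, hs, x, ⟨hxS, hx⟩, rfl⟩
    refine ⟨S.add_mem hs hxS, fun y hy => ?_⟩
    obtain ⟨n, z, hz, hn⟩ := hx y hy
    refine ⟨n, z + n • s, S.add_mem hz (S.nsmul_mem hs n), ?_⟩
    rw [smul_add, hn]
    abel
  · intro ha
    exact ⟨0, S.zero_mem, a, ha, zero_add a⟩
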